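/- Let e : ℕ → ℕ satisfy e(0) = 1 and, for all n ≥ 1, e(n) = 1 + Σ_{i=0}^{n-1} e(i)·e(n−1−i). Then for all n, e(n) = Σ_{k=0}^{n} binom(n,k)·catalan(k), the binomial transform of the Catalan numbers. -/

import Mathlib

open Finset

/-- Vandermonde-type identity on upper indices. -/
lemma vand (m : ℕ) : ∀ a b : ℕ,
    ∑ i ∈ range (m + 1), i.choose a * (m - i).choose b = (m + 1).choose (a + b + 1) := by
  induction m with
  | zero =>
    intro a b
    simp only [Nat.zero_add, range_one, sum_singleton, Nat.sub_zero]
    rcases a with _ | a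
    · rcases b with _ | b
      · simp
      · rw [Nat.choose_eq_zero_of_lt (by omega : (0:ℕ) < b + 1),
          Nat.choose_eq_zero_of_lt (by omega : 1 < 0 + (b + 1) + 1)]; ring
    · rw [Nat.choose_eq_zero_of_lt (by omega : (0:ℕ) < a + 1),
        Nat.choose_eq_zero_of_lt (by omega : 1 < a + 1 + b + 1)]; ring
  | succ m ih =>
    intro a b
    rw [sum_range_succ, Nat.sub_self]
    rcases b with _ | b
    · have hc : ∑ i ∈ range (m + 1), i.choose a * (m + 1 - i).choose 0
          = ∑ i ∈ range (m + 1), i.choose a * (m - i).choose 0 := by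
        apply sum_congr rfl; intro i _; simp
      rw [hc, ih a 0]
      simp only [Nat.choose_zero_right, mul_one, Nat.add_zero]
      rw [Nat.choose_succ_succ (m + 1) a]
      ring
    · have hc : ∑ i ∈ range (m + 1), i.choose a * (m + 1 - i).choose (b + 1)
          = ∑ i ∈ range (m + 1), (i.choose a * (m - i).choose (b + 1)
              + i.choose a * (m - i).choose b) := by
        apply sum_congr rfl
        intro i hi
        rw [mem_range] at hi
        have : m + 1 - i = (m - i) + 1 := by omega
        rw [this, Nat.choose_succ_succ]
        ring
      rw [hc, sum_add_distrib, ih a (b + 1), ih a b,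
        Nat.choose_eq_zero_of_lt (by omega : (0:ℕ) < b + 1), mul_zero, add_zero,
        show a + (b + 1) + 1 = (a + b + 1) + 1 from by ring,
        Nat.choose_succ_succ (m + 1) (a + b + 1)]
      ring

/-- Triangle reindexing. -/
lemma triangle (n : ℕ) (g : ℕ → ℕ → ℕ) (hg : ∀ a b, n ≤ a + b → g a b = 0) :
    ∑ a ∈ range n, ∑ b ∈ range n, g a b
      = ∑ k ∈ range n, ∑ a ∈ range (k + 1), g a (k - a) := by
  rw [← sum_product']
  rw [← sum_filter_of_ne (p := fun p : ℕ × ℕ => p.1 + p.2 < n)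
    (fun x _ hx => by by_contra hc; exact hx (hg x.1 x.2 (by omega)))]
  rw [sum_sigma' (range n) (fun k => range (k + 1)) (fun k a => g a (k - a))]
  apply sum_nbij' (i := fun p => ⟨p.1 + p.2, p.1⟩) (j := fun s => (s.2, s.1 - s.2))
  · intro p hp
    simp only [mem_filter, mem_product, mem_range] at hp
    simp only [mem_sigma, mem_range]
    omega
  · intro s hs
    simp only [mem_sigma, mem_range] at hs
    simp only [mem_filter, mem_product, mem_range]
    omega
  · intro p hp
    simp only [Nat.add_sub_cancel_left]
  · intro s hs
    simp only [mem_sigma, mem_range] at hs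
    have : s.2 + (s.1 - s.2) = s.1 := by omega
    rw [this]
  · intro p hp
    simp only [Nat.add_sub_cancel_left]

lemma ext_sum {i m : ℕ} (h : i ≤ m) :
    ∑ k ∈ range (i + 1), i.choose k * catalan k
      = ∑ k ∈ range (m + 1), i.choose k * catalan k := by
  apply sum_subset (by simp [range_subset]; omega)
  intro x hx hx'
  rw [mem_range] at hx hx'
  rw [Nat.choose_eq_zero_of_lt (by omega), zero_mul]

lemma catalan_succ'' (k : ℕ) :
    catalan (k + 1) = ∑ a ∈ range (k + 1), catalan a * catalan (k - a) := by
  rw [catalan_succ', Nat.sum_antidiagonal_eq_sum_range_succ (fun x y => catalan x * catalan y)]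

lemma key (m : ℕ) :
    ∑ i ∈ range (m + 1),
        (∑ k ∈ range (i + 1), i.choose k * catalan k) *
          (∑ k ∈ range (m - i + 1), (m - i).choose k * catalan k)
      = ∑ k ∈ range (m + 1), (m + 1).choose (k + 1) * catalan (k + 1) := by
  have h1 : ∀ i ∈ range (m + 1),
      (∑ k ∈ range (i + 1), i.choose k * catalan k) *
        (∑ k ∈ range (m - i + 1), (m - i).choose k * catalan k)
      = ∑ a ∈ range (m + 1), ∑ b ∈ range (m + 1),
          i.choose a * (m - i).choose b * (catalan a * catalan b) := by
    intro i hi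
    rw [mem_range] at hi
    rw [ext_sum (by omega : i ≤ m), ext_sum (by omega : m - i ≤ m), sum_mul_sum]
    exact sum_congr rfl fun a _ => sum_congr rfl fun b _ => by ring
  rw [sum_congr rfl h1, sum_comm]
  have h2 : ∀ a ∈ range (m + 1),
      (∑ i ∈ range (m + 1), ∑ b ∈ range (m + 1),
        i.choose a * (m - i).choose b * (catalan a * catalan b))
      = ∑ b ∈ range (m + 1), (m + 1).choose (a + b + 1) * (catalan a * catalan b) := by
    intro a _
    rw [sum_comm]
    apply sum_congr rfl
    intro b _
    rw [← vand m a b, sum_mul]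
  rw [sum_congr rfl h2]
  rw [triangle (m + 1) (fun a b => (m + 1).choose (a + b + 1) * (catalan a * catalan b))
    (fun a b hab => by
      rw [Nat.choose_eq_zero_of_lt (by omega), zero_mul])]
  apply sum_congr rfl
  intro k hk
  have h3 : ∀ a ∈ range (k + 1),
      (m + 1).choose (a + (k - a) + 1) * (catalan a * catalan (k - a))
      = (m + 1).choose (k + 1) * (catalan a * catalan (k - a)) := by
    intro a ha
    rw [mem_range] at ha
    congr 2
    omega
  rw [sum_congr rfl h3, ← mul_sum, ← catalan_succ'']

/-- if `e 0 = 1` and `e n = 1 + Σ_{i=0}^{n-1} e i * e (n-1-i)` for all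
`n ≥ 1`, then `e n = Σ_{k=0}^{n} binom(n,k) * catalan k`, the binomial transform of the
Catalan numbers (combs over a tree). -/
theorem combs_over_tree_eq_binomial_transform_catalan
    (e : ℕ → ℕ) (h0 : e 0 = 1)
    (h : ∀ n, 1 ≤ n → e n = 1 + ∑ i ∈ Finset.range n, e i * e (n - 1 - i)) :
    ∀ n, e n = ∑ k ∈ Finset.range (n + 1), n.choose k * catalan k := by
  intro n
  induction n using Nat.strong_induction_on with
  | _ n ih =>
    match n with
    | 0 => simpa using h0
    | m + 1 =>
      rw [h (m + 1) (by omega)]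
      have hs : ∀ i ∈ range (m + 1),
          e i * e (m + 1 - 1 - i)
          = (∑ k ∈ range (i + 1), i.choose k * catalan k) *
              (∑ k ∈ range (m - i + 1), (m - i).choose k * catalan k) := by
        intro i hi
        rw [mem_range] at hi
        rw [show m + 1 - 1 - i = m - i from by omega, ih i (by omega), ih (m - i) (by omega)]
      rw [sum_congr rfl hs, key m]
      conv_rhs => rw [sum_range_succ']
      have h00 : (m + 1).choose 0 * catalan 0 = 1 := by simp
      rw [h00, add_comm]
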